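/- arXiv:1808.00621 — 4 statements merged into one kernel-verified Lean document; each statement's English description precedes it below -/
import Mathlib

section
/- Suppose all point weights are uniform, w_x = 1 for every x, and n ≥ 2. Then the infimum over all tours S of MCost_∞(S) equals OPTTSP, and the infimum is attained; in particular, every tour S satisfies MCost_∞(S) ≥ OPTTSP, and the periodic tour that repeats an optimal TSP cycle forever satisfies MCost_∞(S) = OPTTSP. -/
open Filter Finset
open scoped ENNReal NNReal
attribute [local instance] Classical.propDecidable

/-- Total distance traveled by the tour `S` from step `t` to step `t'`. -/
noncomputable def tourDist {α : Type*} [MetricSpace α] (S : ℕ → α) (t t' : ℕ) : ℝ≥0∞ :=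
  ∑ τ ∈ Finset.Ico t t', edist (S τ) (S (τ + 1))

/-- `visitTime S x k` is `v_x(k)`: `v_x(0) = 0` and, for `k ≥ 1`, the `k`-th index `t ≥ 1`
with `S t = x`. -/
noncomputable def visitTime {α : Type*} (S : ℕ → α) (x : α) : ℕ → ℕ
  | 0 => 0
  | k + 1 => Nat.nth (fun t => 1 ≤ t ∧ S t = x) k

/-- The maximum absence length from `x` under `S`, `∞` if `x` is visited only finitely often. -/
noncomputable def PCostInf {α : Type*} [MetricSpace α] (S : ℕ → α) (x : α) : ℝ≥0∞ :=
  if {t | 1 ≤ t ∧ S t = x}.Infinite then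
    ⨆ k, tourDist S (visitTime S x k) (visitTime S x (k + 1))
  else ⊤

/-- The quadratic cost of point `x` under tour `S`. -/
noncomputable def PCost2 {α : Type*} [MetricSpace α] (S : ℕ → α) (x : α) : ℝ≥0∞ :=
  Filter.limsup (fun k =>
    (∑ k' ∈ Finset.range (k + 1),
      (tourDist S (visitTime S x k') (visitTime S x (k' + 1))) ^ 2) /
    tourDist S 0 (visitTime S x (k + 1))) Filter.atTop

noncomputable def MCostInf {α : Type*} [MetricSpace α] [Fintype α] (w : α → ℝ) (S : ℕ → α) :
    ℝ≥0∞ :=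
  ⨆ x : α, ENNReal.ofReal (w x) * PCostInf S x

noncomputable def MCost2 {α : Type*} [MetricSpace α] [Fintype α] (w : α → ℝ) (S : ℕ → α) :
    ℝ≥0∞ :=
  ⨆ x : α, ENNReal.ofReal (w x) * PCost2 S x

/-- A tour is periodic if it repeats with some period `m ≥ 1`. -/
def IsPeriodic {α : Type*} (S : ℕ → α) : Prop :=
  ∃ m : ℕ, 1 ≤ m ∧ ∀ t, S (t + m) = S t

/-- The optimum TSP value: the least total length of a Hamiltonian cycle on the `n` points. -/
noncomputable def OPTTSP (α : Type*) [MetricSpace α] (n : ℕ) [NeZero n] : ℝ≥0∞ :=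
  ⨅ σ : ZMod n ≃ α, ∑ i : ZMod n, edist (σ i) (σ (i + 1))

section helpers
variable {α : Type*} [MetricSpace α] (S : ℕ → α)

lemma tourDist_add {a b c : ℕ} (hab : a ≤ b) (hbc : b ≤ c) :
    tourDist S a b + tourDist S b c = tourDist S a c :=
  Finset.sum_Ico_consecutive _ hab hbc

lemma edist_le_tourDist {a b : ℕ} (hab : a ≤ b) : edist (S a) (S b) ≤ tourDist S a b := by
  induction b, hab using Nat.le_induction with
  | base => simp [tourDist]
  | succ b hab ih =>
    have h1 : tourDist S a b + tourDist S b (b + 1) = tourDist S a (b + 1) :=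
      tourDist_add S hab (Nat.le_succ b)
    have h2 : tourDist S b (b + 1) = edist (S b) (S (b + 1)) := by
      simp [tourDist]
    calc edist (S a) (S (b + 1)) ≤ edist (S a) (S b) + edist (S b) (S (b + 1)) :=
          edist_triangle _ _ _
      _ ≤ tourDist S a b + tourDist S b (b + 1) := by rw [h2]; exact add_le_add_left ih _
      _ = tourDist S a (b + 1) := h1

lemma tourDist_telescope (u : ℕ → ℕ) (hu : Monotone u) (m : ℕ) :
    ∑ j ∈ Finset.range m, tourDist S (u j) (u (j + 1)) = tourDist S (u 0) (u m) := by
  induction m with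
  | zero => simp [tourDist]
  | succ m ih =>
    rw [Finset.sum_range_succ, ih]
    exact tourDist_add S (hu (Nat.zero_le m)) (hu (Nat.le_succ m))

lemma exists_sandwich (v : ℕ → ℕ) (t : ℕ) (h0 : v 0 ≤ t) (h : ∃ m, t < v m) :
    ∃ k, v k ≤ t ∧ t < v (k + 1) := by
  classical
  let m := Nat.find h
  have hm : t < v m := Nat.find_spec h
  have hm0 : m ≠ 0 := by
    intro h'
    rw [h'] at hm; omega
  refine ⟨m - 1, ?_, ?_⟩
  · have := Nat.find_min h (m := m - 1) (by omega)
    omega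
  · have : m - 1 + 1 = m := by omega
    rw [this]; exact hm

variable {x : α}

lemma visitTime_strictMono (hx : Set.Infinite {t | 1 ≤ t ∧ S t = x}) : StrictMono (visitTime S x) := by
  have h1 : ∀ k, visitTime S x k < visitTime S x (k + 1) := by
    intro k
    cases k with
    | zero =>
      have := Nat.nth_mem_of_infinite hx 0
      simpa [visitTime] using Nat.lt_of_lt_of_le Nat.zero_lt_one this.1
    | succ k =>
      exact Nat.nth_strictMono hx (Nat.lt_succ_self k)
  exact strictMono_nat_of_lt_succ h1

lemma visitTime_spec (hx : Set.Infinite {t | 1 ≤ t ∧ S t = x}) (k : ℕ) : 1 ≤ visitTime S x (k + 1) ∧ S (visitTime S x (k + 1)) = x :=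
  Nat.nth_mem_of_infinite hx k

lemma nth_add_le (p : ℕ → Prop) (hp : (setOf p).Infinite) (k d : ℕ) (hd : 0 < d)
    (h : p (Nat.nth p k + d)) : Nat.nth p (k + 1) ≤ Nat.nth p k + d := by
  classical
  have hnc : Nat.nth p (Nat.count p (Nat.nth p k + d)) = Nat.nth p k + d := Nat.nth_count h
  have hck : Nat.count p (Nat.nth p k) = k := Nat.count_nth (fun hf => absurd hf hp)
  have hpk : p (Nat.nth p k) := Nat.nth_mem_of_infinite hp k
  have h1 : Nat.count p (Nat.nth p k + 1) = k + 1 := by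
    rw [Nat.count_succ, hck, if_pos hpk]
  have h2 : k + 1 ≤ Nat.count p (Nat.nth p k + d) := by
    rw [← h1]; exact Nat.count_monotone p (by omega)
  calc Nat.nth p (k + 1) ≤ Nat.nth p (Nat.count p (Nat.nth p k + d)) :=
        (Nat.nth_le_nth hp).mpr h2
    _ = Nat.nth p k + d := hnc

end helpers


lemma lower_bound {α : Type*} [MetricSpace α] [Fintype α] (n : ℕ) [NeZero n]
    (hn : 2 ≤ n) (hcard : Fintype.card α = n) (S : ℕ → α) :
    OPTTSP α n ≤ ⨆ x : α, PCostInf S x := by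
  classical
  have hα : Nonempty α := by
    rw [← Fintype.card_pos_iff, hcard]; omega
  by_cases hfin : ∀ x : α, Set.Infinite {t | 1 ≤ t ∧ S t = x}
  · -- every point is visited infinitely often
    set t : ℕ := Finset.univ.sup (fun x => visitTime S x 1) with ht_def
    have ht : ∀ x : α, visitTime S x 1 ≤ t := fun x =>
      Finset.le_sup (f := fun x => visitTime S x 1) (Finset.mem_univ x)
    have hsand : ∀ x : α, ∃ k, visitTime S x k ≤ t ∧ t < visitTime S x (k + 1) := by
      intro x
      apply exists_sandwich
      · simp [visitTime]
      · exact ⟨t + 1, lt_of_lt_of_le (Nat.lt_succ_self t)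
          (visitTime_strictMono S (hfin x)).le_apply⟩
    choose k hk1 hk2 using hsand
    set g : α → ℕ := fun x => visitTime S x (k x + 1) with hg_def
    have hgS : ∀ x, S (g x) = x := fun x => (visitTime_spec S (hfin x) (k x)).2
    have hg_inj : Function.Injective g := fun a b h => by
      rw [← hgS a, ← hgS b, h]
    have hgt : ∀ x, t < g x := hk2
    obtain ⟨y, hy⟩ := Finite.exists_max g
    have hky : 1 ≤ k y := by
      by_contra h
      have h0 : k y = 0 := by omega
      have := hk2 y
      rw [h0] at this
      exact absurd (ht y) (not_le.mpr this)
    have hSy : S (visitTime S y (k y)) = y := by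
      obtain ⟨k', hk'⟩ : ∃ k', k y = k' + 1 := ⟨k y - 1, by omega⟩
      rw [hk']
      exact (visitTime_spec S (hfin y) k').2
    -- the finset of first-visit times after t
    set T : Finset ℕ := Finset.univ.image g with hT_def
    have hT : T.card = n := by
      rw [hT_def, Finset.card_image_of_injective _ hg_inj, Finset.card_univ, hcard]
    set e := T.orderIsoOfFin hT with he_def
    have hn1 : ∀ j : ℕ, min j (n - 1) < n := fun j => by omega
    set u : ℕ → ℕ := fun j => (e ⟨min j (n - 1), hn1 j⟩ : ℕ) with hu_def
    have hu_mem : ∀ j, u j ∈ T := fun j => (e ⟨min j (n - 1), hn1 j⟩).2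
    have hu_mono : Monotone u := by
      intro a b hab
      have h1 : (⟨min a (n - 1), hn1 a⟩ : Fin n) ≤ ⟨min b (n - 1), hn1 b⟩ := by
        simp only [Fin.mk_le_mk]; omega
      exact e.le_iff_le.mpr h1
    have hu_inj : ∀ i j, i ≤ n - 1 → j ≤ n - 1 → u i = u j → i = j := by
      intro i j hi hj h
      have h1 : (⟨min i (n - 1), hn1 i⟩ : Fin n) = ⟨min j (n - 1), hn1 j⟩ :=
        e.injective (Subtype.ext h)
      have := Fin.mk.injEq (min i (n - 1)) (hn1 i) (min j (n - 1)) (hn1 j) ▸ h1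
      simp only [Fin.mk.injEq] at h1
      omega
    have hTg : ∀ s ∈ T, g (S s) = s := by
      intro s hs
      obtain ⟨x, -, rfl⟩ := Finset.mem_image.mp hs
      rw [hgS]
    have hT_le : ∀ s ∈ T, s ≤ g y := by
      intro s hs
      obtain ⟨x, -, rfl⟩ := Finset.mem_image.mp hs
      exact hy x
    have hT_gt : ∀ s ∈ T, t < s := by
      intro s hs
      obtain ⟨x, -, rfl⟩ := Finset.mem_image.mp hs
      exact hgt x
    have hu_last : u (n - 1) = g y := by
      refine le_antisymm (hT_le _ (hu_mem _)) ?_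
      obtain ⟨j, hj⟩ := e.surjective ⟨g y, Finset.mem_image.mpr ⟨y, Finset.mem_univ y, rfl⟩⟩
      have h1 : (e j : ℕ) = g y := congrArg Subtype.val hj
      have h2 : u j.val = g y := by
        rw [hu_def]
        have : min j.val (n - 1) = j.val := by
          have := j.isLt; omega
        simp only [this]
        rw [Fin.eta]
        exact h1
      rw [← h2]
      exact hu_mono (by have := j.isLt; omega)
    set z : ℕ → α := fun j => S (u j) with hz_def
    have hz_inj : ∀ i j, i ≤ n - 1 → j ≤ n - 1 → z i = z j → i = j := by
      intro i j hi hj h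
      apply hu_inj i j hi hj
      rw [← hTg (u i) (hu_mem i), ← hTg (u j) (hu_mem j)]
      exact congrArg g h
    have hzval_inj : Function.Injective (fun i : ZMod n => z i.val) := by
      intro a b h
      apply ZMod.val_injective n
      exact hz_inj a.val b.val (by have := ZMod.val_lt a; omega)
        (by have := ZMod.val_lt b; omega) h
    have hbij : Function.Bijective (fun i : ZMod n => z i.val) := by
      rw [Fintype.bijective_iff_injective_and_card]
      exact ⟨hzval_inj, by rw [ZMod.card, hcard]⟩
    set σ : ZMod n ≃ α := Equiv.ofBijective _ hbij with hσ_def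
    have hσ : ∀ i : ZMod n, σ i = z i.val := fun _ => rfl
    haveI : Fact (1 < n) := ⟨hn⟩
    -- reindex the cycle sum
    have hsum : ∑ i : ZMod n, edist (σ i) (σ (i + 1)) =
        ∑ j ∈ Finset.range n, edist (z j) (z ((j + 1) % n)) := by
      refine Finset.sum_nbij' (fun i : ZMod n => i.val) (fun j : ℕ => (j : ZMod n))
        (fun a _ => Finset.mem_range.mpr (ZMod.val_lt a))
        (fun a _ => Finset.mem_univ _)
        (fun a _ => ZMod.natCast_rightInverse a)
        (fun a ha => ZMod.val_cast_of_lt (Finset.mem_range.mp ha))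
        (fun a _ => ?_)
      rw [hσ, hσ]
      congr 2
      rw [ZMod.val_add, ZMod.val_one]
    have hsplit : ∑ j ∈ Finset.range n, edist (z j) (z ((j + 1) % n)) =
        (∑ j ∈ Finset.range (n - 1), edist (z j) (z (j + 1))) +
          edist (z (n - 1)) (z 0) := by
      have h1 : n = (n - 1) + 1 := by omega
      calc ∑ j ∈ Finset.range n, edist (z j) (z ((j + 1) % n))
          = ∑ j ∈ Finset.range (n - 1 + 1), edist (z j) (z ((j + 1) % n)) := by rw [← h1]
        _ = ∑ j ∈ Finset.range (n - 1), edist (z j) (z ((j + 1) % n)) +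
              edist (z (n - 1)) (z ((n - 1 + 1) % n)) := Finset.sum_range_succ _ _
        _ = (∑ j ∈ Finset.range (n - 1), edist (z j) (z (j + 1))) +
              edist (z (n - 1)) (z 0) := by
            congr 1
            · refine Finset.sum_congr rfl fun j hj => ?_
              have hj' := Finset.mem_range.mp hj
              rw [Nat.mod_eq_of_lt (by omega)]
            · rw [show n - 1 + 1 = n from (by omega), Nat.mod_self]
    -- bound the pieces
    have hb1 : ∑ j ∈ Finset.range (n - 1), edist (z j) (z (j + 1)) ≤
        tourDist S (u 0) (u (n - 1)) := by
      rw [← tourDist_telescope S u hu_mono (n - 1)]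
      apply Finset.sum_le_sum
      intro j _
      exact edist_le_tourDist S (hu_mono (Nat.le_succ j))
    have hvy_le : visitTime S y (k y) ≤ t := hk1 y
    have hu0_gt : t < u 0 := hT_gt _ (hu_mem 0)
    have hb2 : edist (z (n - 1)) (z 0) ≤ tourDist S (visitTime S y (k y)) (u 0) := by
      have hzn : z (n - 1) = S (visitTime S y (k y)) := by
        show S (u (n - 1)) = S (visitTime S y (k y))
        rw [hu_last, hgS, hSy]
      rw [hzn]
      show edist (S (visitTime S y (k y))) (S (u 0)) ≤ _
      exact edist_le_tourDist S (by omega)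
    have hle : ∑ i : ZMod n, edist (σ i) (σ (i + 1)) ≤
        tourDist S (visitTime S y (k y)) (visitTime S y (k y + 1)) := by
      rw [hsum, hsplit]
      have hgy : u (n - 1) = visitTime S y (k y + 1) := hu_last
      calc (∑ j ∈ Finset.range (n - 1), edist (z j) (z (j + 1))) + edist (z (n - 1)) (z 0)
          ≤ tourDist S (u 0) (u (n - 1)) + tourDist S (visitTime S y (k y)) (u 0) :=
            add_le_add hb1 hb2
        _ = tourDist S (visitTime S y (k y)) (u 0) + tourDist S (u 0) (u (n - 1)) :=
            add_comm _ _
        _ = tourDist S (visitTime S y (k y)) (u (n - 1)) :=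
            tourDist_add S (a := visitTime S y (k y)) (b := u 0) (c := u (n - 1))
              (by omega) (hu_mono (Nat.zero_le _))
        _ = tourDist S (visitTime S y (k y)) (visitTime S y (k y + 1)) := by rw [hgy]
    calc OPTTSP α n ≤ ∑ i : ZMod n, edist (σ i) (σ (i + 1)) := iInf_le _ σ
      _ ≤ tourDist S (visitTime S y (k y)) (visitTime S y (k y + 1)) := hle
      _ ≤ PCostInf S y := by
          rw [PCostInf, if_pos (hfin y)]
          exact le_iSup (fun k => tourDist S (visitTime S y k) (visitTime S y (k + 1))) (k y)
      _ ≤ ⨆ x : α, PCostInf S x := le_iSup _ y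
  · push_neg at hfin
    obtain ⟨x, hx⟩ := hfin
    have : PCostInf S x = ⊤ := by rw [PCostInf, if_neg (Set.not_infinite.mpr hx)]
    calc OPTTSP α n ≤ ⊤ := le_top
      _ = PCostInf S x := this.symm
      _ ≤ ⨆ x : α, PCostInf S x := le_iSup _ x

lemma periodic_cost {α : Type*} [MetricSpace α] [Fintype α] (n : ℕ) [NeZero n]
    (hn : 2 ≤ n) (σ : ZMod n ≃ α) (x : α) :
    PCostInf (fun t : ℕ => σ ((t : ℕ) : ZMod n)) x ≤
      ∑ i : ZMod n, edist (σ i) (σ (i + 1)) := by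
  classical
  set S : ℕ → α := fun t : ℕ => σ ((t : ℕ) : ZMod n) with hS_def
  set L : ℝ≥0∞ := ∑ i : ZMod n, edist (σ i) (σ (i + 1)) with hL_def
  have hper : ∀ t : ℕ, S (t + n) = S t := by
    intro t
    show σ (((t + n : ℕ) : ZMod n)) = σ ((t : ℕ) : ZMod n)
    congr 1
    push_cast [ZMod.natCast_self]
    ring
  -- Step 1: distance over any window of length ≤ n is at most L
  set F : ZMod n → ℝ≥0∞ := fun i => edist (σ i) (σ (i + 1)) with hF_def
  have hwin : ∀ a b : ℕ, b ≤ a + n → tourDist S a b ≤ L := by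
    intro a b hb
    have h1 : tourDist S a b = ∑ τ ∈ Finset.Ico a b, F ((τ : ZMod n)) := by
      refine Finset.sum_congr rfl fun τ _ => ?_
      show edist (σ _) (σ _) = edist (σ _) (σ _)
      congr 2
      push_cast
      ring
    rw [h1]
    have hinj : ∀ τ ∈ Finset.Ico a b, ∀ τ' ∈ Finset.Ico a b,
        (τ : ZMod n) = (τ' : ZMod n) → τ = τ' := by
      intro τ hτ τ' hτ' h
      rw [Finset.mem_Ico] at hτ hτ'
      have hmod : τ ≡ τ' [MOD n] := (ZMod.natCast_eq_natCast_iff τ τ' n).mp h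
      rcases le_total τ τ' with hle | hle
      · have hd : n ∣ τ' - τ := (Nat.modEq_iff_dvd' hle).mp hmod
        have h0 : τ' - τ = 0 := Nat.eq_zero_of_dvd_of_lt hd (by omega)
        omega
      · have hd : n ∣ τ - τ' := (Nat.modEq_iff_dvd' hle).mp hmod.symm
        have h0 : τ - τ' = 0 := Nat.eq_zero_of_dvd_of_lt hd (by omega)
        omega
    calc ∑ τ ∈ Finset.Ico a b, F ((τ : ZMod n))
        = ∑ j ∈ (Finset.Ico a b).image (fun τ : ℕ => (τ : ZMod n)), F j :=
          (Finset.sum_image hinj).symm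
      _ ≤ ∑ j : ZMod n, F j := Finset.sum_le_sum_of_subset (Finset.subset_univ _)
      _ = L := rfl
  -- Step 2: x is visited infinitely often
  set i : ZMod n := σ.symm x with hi_def
  have hSix : ∀ t : ℕ, (t : ZMod n) = i → S t = x := by
    intro t ht
    show σ _ = x
    rw [ht, hi_def, Equiv.apply_symm_apply]
  have hinf : Set.Infinite {t | 1 ≤ t ∧ S t = x} := by
    apply Set.infinite_of_injective_forall_mem (f := fun k : ℕ => i.val + n * (k + 1))
    · intro a b h
      simp only at h
      have hn0 : 0 < n := by omega
      have := Nat.eq_of_mul_eq_mul_left hn0 (show n * (a + 1) = n * (b + 1) by omega)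
      omega
    · intro m
      constructor
      · have : 1 ≤ n := by omega
        nlinarith [Nat.zero_le i.val]
      · apply hSix
        push_cast [ZMod.natCast_self]
        simp [ZMod.natCast_rightInverse i]
  -- Step 3: consecutive visit gaps are at most n
  set p : ℕ → Prop := fun t => 1 ≤ t ∧ S t = x with hp_def
  have hp_inf : (setOf p).Infinite := hinf
  have hp_per : ∀ t, p t → p (t + n) := by
    intro t ht
    exact ⟨by omega, by rw [hper t]; exact ht.2⟩
  have hgap : ∀ k : ℕ, visitTime S x (k + 1) ≤ visitTime S x k + n := by
    intro k
    cases k with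
    | zero =>
      show Nat.nth p 0 ≤ 0 + n
      rw [Nat.nth_zero]
      set r : ℕ := if i.val = 0 then n else i.val with hr_def
      have hr1 : 1 ≤ r := by
        rw [hr_def]; split <;> omega
      have hrn : r ≤ n := by
        have := ZMod.val_lt i
        rw [hr_def]; split <;> omega
      have hrp : p r := by
        refine ⟨hr1, hSix r ?_⟩
        rw [hr_def]
        split
        · rename_i h0
          rw [ZMod.natCast_self]
          apply (ZMod.val_injective n)
          rw [ZMod.val_zero, h0]
        · exact ZMod.natCast_rightInverse i
      calc sInf (setOf p) ≤ r := Nat.sInf_le hrp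
        _ ≤ 0 + n := by omega
    | succ k =>
      show Nat.nth p (k + 1) ≤ Nat.nth p k + n
      exact nth_add_le p hp_inf k n (by omega) (hp_per _ (Nat.nth_mem_of_infinite hp_inf k))
  -- Step 4: conclude
  rw [PCostInf, if_pos hinf]
  refine iSup_le fun k => ?_
  exact hwin _ _ (hgap k)

/-- With uniform weights `w ≡ 1` and `n ≥ 2` points, the infimum over all
tours of the weighted Max-TSP objective equals `OPTTSP` and is attained; in particular every
tour has objective at least `OPTTSP`, and the periodic tour repeating an optimal TSP cycle
achieves exactly `OPTTSP`. -/
theorem stmt0 {α : Type*} [MetricSpace α] [Fintype α] (n : ℕ) [NeZero n]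
    (hn : 2 ≤ n) (hcard : Fintype.card α = n) (w : α → ℝ) (hw : ∀ x, w x = 1) :
    (⨅ S : ℕ → α, MCostInf w S) = OPTTSP α n ∧
    (∀ S : ℕ → α, OPTTSP α n ≤ MCostInf w S) ∧
    (∃ σ : ZMod n ≃ α,
      (∑ i : ZMod n, edist (σ i) (σ (i + 1))) = OPTTSP α n ∧
      MCostInf w (fun t : ℕ => σ ((t : ℕ) : ZMod n)) = OPTTSP α n) := by
  classical
  have hM : ∀ S : ℕ → α, MCostInf w S = ⨆ x : α, PCostInf S x := by
    intro S
    unfold MCostInf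
    refine iSup_congr fun x => ?_
    rw [hw x, ENNReal.ofReal_one, one_mul]
  have hlow : ∀ S : ℕ → α, OPTTSP α n ≤ MCostInf w S := by
    intro S; rw [hM]; exact lower_bound n hn hcard S
  haveI : Nonempty (ZMod n ≃ α) := ⟨Fintype.equivOfCardEq (by rw [ZMod.card, hcard])⟩
  obtain ⟨σ₀, hσ₀⟩ :=
    Finite.exists_min (fun σ : ZMod n ≃ α => ∑ i : ZMod n, edist (σ i) (σ (i + 1)))
  have hopt : (∑ i : ZMod n, edist (σ₀ i) (σ₀ (i + 1))) = OPTTSP α n :=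
    le_antisymm (le_iInf hσ₀) (iInf_le _ σ₀)
  set S₀ : ℕ → α := fun t : ℕ => σ₀ ((t : ℕ) : ZMod n) with hS₀
  have hub : MCostInf w S₀ ≤ OPTTSP α n := by
    rw [hM, ← hopt]
    exact iSup_le fun x => periodic_cost n hn σ₀ x
  have heq : MCostInf w S₀ = OPTTSP α n := le_antisymm hub (hlow S₀)
  exact ⟨le_antisymm (le_trans (iInf_le _ S₀) hub) (le_iInf hlow), hlow, σ₀, hopt, heq⟩
end

section
/- Let G = (V, E) be a finite undirected graph with nonnegative edge weights, let K ≥ 1, let 0 ≤ γ < 1/2 and C > 0, and let E_1, …, E_K ⊆ E be connected edge sets with c(E_i) < C for every i. Assume every vertex of G is an endpoint of an edge in at least (1−γ)·K of the sets E_i. Then G has a spanning tree of total cost strictly less than (2/(1−2γ))·C. -/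
open Finset SimpleGraph

attribute [local instance] Classical.propDecidable

/-- An edge set `F` is connected if the subgraph formed by the edges of `F` together with
their endpoints is connected, i.e., any two vertices touched by `F` are joined by a path
using only edges of `F`. -/
def EdgesConnected {V : Type*} (F : Set (Sym2 V)) : Prop :=
  ∀ u v : V, (∃ e ∈ F, u ∈ e) → (∃ e ∈ F, v ∈ e) →
    (SimpleGraph.fromEdgeSet F).Reachable u v

section Aux

variable {V : Type*}

/-- an edge crosses a vertex set -/
def XCross (S : Set V) (e : Sym2 V) : Prop := ∃ a b, e = s(a, b) ∧ a ∈ S ∧ b ∉ S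

/-- an edge crosses a setoid (its endpoints are inequivalent) -/
def RCross (r : Setoid V) (e : Sym2 V) : Prop := ∃ a b, e = s(a, b) ∧ ¬ r.r a b

/-- graph whose edges are F together with all pairs related by r -/
noncomputable def HGraph (r : Setoid V) (F : Finset (Sym2 V)) : SimpleGraph V :=
  fromEdgeSet (↑F ∪ Sym2.fromRel (⟨fun _ _ h => r.iseqv.symm h⟩ : Std.Symm r.r))

lemma reachable_transfer {G G' : SimpleGraph V}
    (h : ∀ u v, G.Adj u v → G'.Reachable u v) {u v : V} (hr : G.Reachable u v) :
    G'.Reachable u v := by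
  obtain ⟨p⟩ := hr
  induction p with
  | nil => exact Reachable.refl _
  | cons h' _ ih => exact (h _ _ h').trans ih

lemma walk_cross {G : SimpleGraph V} {u v : V} (p : G.Walk u v) (S : Set V)
    (hu : u ∈ S) (hv : v ∉ S) : ∃ e ∈ p.edges, XCross S e := by
  induction p with
  | nil => exact absurd hu hv
  | @cons a b c h' p ih =>
    by_cases hb : b ∈ S
    · obtain ⟨e, he, hx⟩ := ih hb hv
      exact ⟨e, by simp [he], hx⟩
    · exact ⟨s(a, b), by simp, a, b, rfl, hu, hb⟩

end Aux

section Key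

variable {V : Type*} [Fintype V] [Nonempty V]

/-- Key lemma: if a nonnegative fractional edge weight `m` covers every cut of `V`
compatible with a setoid `r`, then there is a cheap set of edges connecting up the
classes of `r`. -/
lemma hgraph_adj (r : Setoid V) (F : Finset (Sym2 V)) (u v : V) :
    (HGraph r F).Adj u v ↔ (s(u, v) ∈ F ∨ r.r u v) ∧ u ≠ v := by
  rw [HGraph, fromEdgeSet_adj]
  constructor
  · rintro ⟨h, hne⟩
    refine ⟨?_, hne⟩
    rcases h with h | h
    · exact Or.inl h
    · exact Or.inr ((Sym2.fromRel_prop).mp h)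
  · rintro ⟨h, hne⟩
    refine ⟨?_, hne⟩
    rcases h with h | h
    · exact Or.inl h
    · exact Or.inr ((Sym2.fromRel_prop).mpr h)

lemma keyM (m : Sym2 V → ℝ) (hm : ∀ e, 0 ≤ m e) :
    ∀ (n : ℕ) (r : Setoid V) (w : Sym2 V → ℝ), (∀ e, 0 ≤ w e) →
    Fintype.card (Quotient r) ≤ n →
    (∀ S : Set V, S.Nonempty → S ≠ Set.univ → (∀ a b, r.r a b → (a ∈ S ↔ b ∈ S)) →
      1 ≤ ∑ e ∈ univ.filter (fun e => XCross S e), m e) →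
    ∃ F : Finset (Sym2 V),
      (∀ e ∈ F, m e ≠ 0 ∧ RCross r e) ∧
      F.card + 1 ≤ Fintype.card (Quotient r) ∧
      (HGraph r F).Connected ∧
      ∑ e ∈ F, w e ≤ 2 * ∑ e ∈ univ.filter (fun e => RCross r e), m e * w e := by
  intro n
  induction n with
  | zero =>
    intro r w hw hcard hcut
    exfalso
    haveI : Nonempty (Quotient r) := ⟨Quotient.mk r (Classical.arbitrary V)⟩
    have := Fintype.card_pos (α := Quotient r)
    omega
  | succ n ihn =>
    intro r w hw hcard hcut
    by_cases h1 : Fintype.card (Quotient r) ≤ 1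
    · -- base case : a single class, take F = ∅
      haveI : Nonempty (Quotient r) := ⟨Quotient.mk r (Classical.arbitrary V)⟩
      have hall : ∀ u v : V, r.r u v := fun u v =>
        Quotient.eq''.mp (Fintype.card_le_one_iff.mp h1 _ _)
      refine ⟨∅, by simp, by simpa using Nat.succ_le_of_lt (Fintype.card_pos (α := Quotient r)), ?_, ?_⟩
      · refine SimpleGraph.Connected.mk (fun u v => ?_)
        by_cases huv : u = v
        · subst huv; exact Reachable.refl _
        · exact SimpleGraph.Adj.reachable
            ((hgraph_adj r ∅ u v).mpr ⟨Or.inr (hall u v), huv⟩)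
      · rw [Finset.sum_empty]
        have : 0 ≤ ∑ e ∈ univ.filter (fun e => RCross r e), m e * w e :=
          Finset.sum_nonneg (fun e _ => mul_nonneg (hm e) (hw e))
        linarith
    · push_neg at h1
      set X : Finset (Sym2 V) := univ.filter (fun e => m e ≠ 0 ∧ RCross r e) with hXdef
      -- class of a quotient element, as a set
      set S : Quotient r → Set V := fun c => {v : V | Quotient.mk r v = c} with hSdef
      have hSclosed : ∀ (c : Quotient r) (α β : V), r.r α β → α ∈ S c → β ∈ S c := by
        intro c α β hr hα
        have : Quotient.mk r α = Quotient.mk r β := Quotient.sound hr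
        simp only [hSdef, Set.mem_setOf_eq] at hα ⊢
        rw [← this]; exact hα
      have hcross_mem : ∀ (c : Quotient r) (e : Sym2 V), m e ≠ 0 → XCross (S c) e → e ∈ X := by
        intro c e hme ⟨α, β, heq, hα, hβ⟩
        refine Finset.mem_filter.mpr ⟨Finset.mem_univ _, hme, α, β, heq, fun hr => ?_⟩
        exact hβ (hSclosed c α β hr hα)
      -- each class cut contributes at least 1
      have h_each : ∀ c : Quotient r,
          1 ≤ ∑ e ∈ univ.filter (fun e => XCross (S c) e), m e := by
        intro c
        obtain ⟨v0, hv0⟩ := Quot.exists_rep c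
        obtain ⟨c', hc'⟩ := Fintype.exists_ne_of_one_lt_card h1 c
        obtain ⟨v1, hv1⟩ := Quot.exists_rep c'
        refine hcut (S c) ⟨v0, hv0⟩ ?_ ?_
        · intro hSuniv
          apply hc'
          have : v1 ∈ S c := hSuniv ▸ Set.mem_univ v1
          rw [← hv1]
          exact this
        · intro α β hr
          exact ⟨fun h => hSclosed c α β hr h, fun h => hSclosed c β α (r.iseqv.symm hr) h⟩
      -- the main counting bound : card(Quotient r) ≤ 2 ∑_{e ∈ X} m e
      have hcount : (Fintype.card (Quotient r) : ℝ) ≤ 2 * ∑ e ∈ X, m e := by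
        have step1 : (Fintype.card (Quotient r) : ℝ) ≤
            ∑ c : Quotient r, ∑ e ∈ univ.filter (fun e => XCross (S c) e), m e := by
          have hcc : (Fintype.card (Quotient r) : ℝ) = ∑ _c : Quotient r, (1 : ℝ) := by simp
          rw [hcc]
          exact Finset.sum_le_sum (fun c _ => h_each c)
        have step2 : ∑ c : Quotient r, ∑ e ∈ univ.filter (fun e => XCross (S c) e), m e
            = ∑ e : Sym2 V,
                ((univ.filter (fun c : Quotient r => XCross (S c) e)).card : ℝ) * m e := by
          simp_rw [Finset.sum_filter]
          rw [Finset.sum_comm]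
          congr 1
          ext e
          rw [← Finset.sum_filter, Finset.sum_const, nsmul_eq_mul]
        have step3 : ∀ e : Sym2 V,
            ((univ.filter (fun c : Quotient r => XCross (S c) e)).card : ℝ) * m e ≤
              (if e ∈ X then 2 * m e else 0) := by
          intro e
          by_cases hme : m e = 0
          · simp [hme]
          by_cases hfe : (univ.filter (fun c : Quotient r => XCross (S c) e)) = ∅
          · rw [hfe]
            simp only [Finset.card_empty, Nat.cast_zero, zero_mul]
            split
            · exact mul_nonneg zero_le_two (hm e)
            · exact le_refl _
          · obtain ⟨c, hc⟩ := Finset.nonempty_of_ne_empty hfe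
            have hcX := (Finset.mem_filter.mp hc).2
            obtain ⟨α, β, heq, hα, hβ⟩ := hcX
            have heX : e ∈ X := hcross_mem c e hme ⟨α, β, heq, hα, hβ⟩
            rw [if_pos heX]
            have hsub2 : (univ.filter (fun c : Quotient r => XCross (S c) e)) ⊆
                {Quotient.mk r α, Quotient.mk r β} := by
              intro c' hc'
              have := (Finset.mem_filter.mp hc').2
              obtain ⟨α', β', heq', hα', hβ'⟩ := this
              rw [heq] at heq'
              rw [Sym2.eq_iff] at heq'
              simp only [Finset.mem_insert, Finset.mem_singleton]
              have hα2 : Quotient.mk r α' = c' := hα'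
              rcases heq' with ⟨h1', h2'⟩ | ⟨h1', h2'⟩
              · left; rw [← hα2, h1']
              · right; rw [← hα2, h2']
            have hcard2 : (univ.filter (fun c : Quotient r => XCross (S c) e)).card ≤ 2 := by
              refine (Finset.card_le_card hsub2).trans ?_
              refine (Finset.card_insert_le _ _).trans ?_
              simp
            have : ((univ.filter (fun c : Quotient r => XCross (S c) e)).card : ℝ) ≤ 2 := by
              exact_mod_cast hcard2
            exact mul_le_mul_of_nonneg_right this (hm e)
        have step4 : ∑ e : Sym2 V, (if e ∈ X then 2 * m e else 0) = 2 * ∑ e ∈ X, m e := by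
          rw [← Finset.sum_filter, Finset.filter_mem_eq_inter, Finset.univ_inter,
            Finset.mul_sum]
        calc (Fintype.card (Quotient r) : ℝ)
            ≤ ∑ c : Quotient r, ∑ e ∈ univ.filter (fun e => XCross (S c) e), m e := step1
          _ = ∑ e : Sym2 V,
                ((univ.filter (fun c : Quotient r => XCross (S c) e)).card : ℝ) * m e := step2
          _ ≤ ∑ e : Sym2 V, (if e ∈ X then 2 * m e else 0) :=
              Finset.sum_le_sum (fun e _ => step3 e)
          _ = 2 * ∑ e ∈ X, m e := step4
      -- X is nonempty ; take a crossing edge of minimal weight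
      have hXne : X.Nonempty := by
        rw [Finset.nonempty_iff_ne_empty]
        intro hXe
        rw [hXe, Finset.sum_empty, mul_zero] at hcount
        have : (1 : ℝ) < (Fintype.card (Quotient r) : ℝ) := by exact_mod_cast h1
        linarith
      obtain ⟨estar, heX, hemin⟩ := X.exists_min_image w hXne
      obtain ⟨hem, a, b, heab, hnab⟩ := (Finset.mem_filter.mp heX).2
      have hl0 : 0 ≤ w estar := hw estar
      -- the coarser setoid merging the classes of a and b
      have hsymm' : ∀ u v : V, (r.r u v ∨ (r.r u a ∧ r.r b v) ∨ (r.r u b ∧ r.r a v)) →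
          (r.r v u ∨ (r.r v a ∧ r.r b u) ∨ (r.r v b ∧ r.r a u)) := by
        rintro u v (h | ⟨h1', h2'⟩ | ⟨h1', h2'⟩)
        · exact Or.inl (r.iseqv.symm h)
        · exact Or.inr (Or.inr ⟨r.iseqv.symm h2', r.iseqv.symm h1'⟩)
        · exact Or.inr (Or.inl ⟨r.iseqv.symm h2', r.iseqv.symm h1'⟩)
      have htrans' : ∀ u v z : V,
          (r.r u v ∨ (r.r u a ∧ r.r b v) ∨ (r.r u b ∧ r.r a v)) →
          (r.r v z ∨ (r.r v a ∧ r.r b z) ∨ (r.r v b ∧ r.r a z)) →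
          (r.r u z ∨ (r.r u a ∧ r.r b z) ∨ (r.r u b ∧ r.r a z)) := by
        rintro u v z (h | ⟨h1', h2'⟩ | ⟨h1', h2'⟩) (g | ⟨g1, g2⟩ | ⟨g1, g2⟩)
        · exact Or.inl (r.iseqv.trans h g)
        · exact Or.inr (Or.inl ⟨r.iseqv.trans h g1, g2⟩)
        · exact Or.inr (Or.inr ⟨r.iseqv.trans h g1, g2⟩)
        · exact Or.inr (Or.inl ⟨h1', r.iseqv.trans h2' g⟩)
        · exact absurd (r.iseqv.symm (r.iseqv.trans h2' g1)) hnab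
        · exact Or.inl (r.iseqv.trans h1' g2)
        · exact Or.inr (Or.inr ⟨h1', r.iseqv.trans h2' g⟩)
        · exact Or.inl (r.iseqv.trans h1' g2)
        · exact absurd (r.iseqv.trans h2' g1) hnab
      set r' : Setoid V := ⟨fun u v => r.r u v ∨ (r.r u a ∧ r.r b v) ∨ (r.r u b ∧ r.r a v),
        ⟨fun u => Or.inl (r.iseqv.refl u), fun {u v} h => hsymm' u v h,
          fun {u v z} h g => htrans' u v z h g⟩⟩ with hr'def
      have hle : ∀ u v : V, r.r u v → r'.r u v := fun _ _ h => Or.inl h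
      have hr'ab : r'.r a b := Or.inr (Or.inl ⟨r.iseqv.refl a, r.iseqv.refl b⟩)
      -- the quotient by r' is strictly smaller
      have hq' : Fintype.card (Quotient r') < Fintype.card (Quotient r) := by
        have hsur : Function.Surjective
            (Quotient.lift (fun v => Quotient.mk r' v)
              (fun u v h => Quotient.sound (hle u v h)) : Quotient r → Quotient r') := by
          intro q'
          obtain ⟨v, rfl⟩ := Quot.exists_rep q'
          exact ⟨Quotient.mk r v, rfl⟩
        have hninj : ¬ Function.Injective
            (Quotient.lift (fun v => Quotient.mk r' v)
              (fun u v h => Quotient.sound (hle u v h)) : Quotient r → Quotient r') := by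
          intro hinj
          have h2' : (Quotient.mk r a) = (Quotient.mk r b) := hinj (Quotient.sound hr'ab)
          exact hnab (Quotient.eq''.mp h2')
        exact Fintype.card_lt_of_surjective_not_injective _ hsur hninj
      -- reduced weights
      set w' : Sym2 V → ℝ := fun e => if e ∈ X then w e - w estar else w e with hw'def
      have hw' : ∀ e, 0 ≤ w' e := by
        intro e
        simp only [hw'def]
        split
        · next h => linarith [hemin e h]
        · exact hw e
      -- the cut condition descends to r'
      have hcut' : ∀ S : Set V, S.Nonempty → S ≠ Set.univ →
          (∀ a' b' : V, r'.r a' b' → (a' ∈ S ↔ b' ∈ S)) →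
          1 ≤ ∑ e ∈ univ.filter (fun e => XCross S e), m e := by
        intro S hne hnuniv hcl
        exact hcut S hne hnuniv (fun a' b' h => hcl a' b' (hle a' b' h))
      obtain ⟨F', hF'sub, hF'card, hF'conn, hF'cost⟩ :=
        ihn r' w' hw' (by omega) hcut'
      -- RCross r' implies RCross r
      have hRR : ∀ e : Sym2 V, RCross r' e → RCross r e := by
        rintro e ⟨α, β, heq, hn⟩
        exact ⟨α, β, heq, fun h => hn (hle α β h)⟩
      have hestar_not : estar ∉ F' := by
        intro hmem
        obtain ⟨-, α, β, heq, hn⟩ := hF'sub estar hmem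
        rw [heab, Sym2.eq_iff] at heq
        rcases heq with ⟨ha', hb'⟩ | ⟨ha', hb'⟩
        · exact hn (ha' ▸ hb' ▸ hr'ab)
        · exact hn (ha' ▸ hb' ▸ (hsymm' a b (hr'ab)))
      refine ⟨insert estar F', ?_, ?_, ?_, ?_⟩
      · intro e he
        rcases Finset.mem_insert.mp he with rfl | he'
        · exact ⟨hem, a, b, heab, hnab⟩
        · obtain ⟨h1', h2'⟩ := hF'sub e he'
          exact ⟨h1', hRR e h2'⟩
      · rw [Finset.card_insert_of_notMem hestar_not]
        omega
      · -- connectivity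
        have hstep : ∀ u v : V, r.r u v → (HGraph r (insert estar F')).Reachable u v := by
          intro u v h
          by_cases huv : u = v
          · subst huv; exact Reachable.refl _
          · exact SimpleGraph.Adj.reachable
              ((hgraph_adj _ _ u v).mpr ⟨Or.inr h, huv⟩)
        have hab_reach : (HGraph r (insert estar F')).Reachable a b := by
          refine SimpleGraph.Adj.reachable ((hgraph_adj _ _ a b).mpr ⟨Or.inl ?_, ?_⟩)
          · rw [← heab]; exact Finset.mem_insert_self _ _
          · intro h; exact hnab (h ▸ r.iseqv.refl a)
        have hadj2r : ∀ u v : V, (HGraph r' F').Adj u v →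
            (HGraph r (insert estar F')).Reachable u v := by
          intro u v hadj
          obtain ⟨hmem, hne⟩ := (hgraph_adj r' F' u v).mp hadj
          rcases hmem with hmem | hmem
          · exact SimpleGraph.Adj.reachable ((hgraph_adj _ _ u v).mpr
              ⟨Or.inl (Finset.mem_insert_of_mem hmem), hne⟩)
          · rcases hmem with h | ⟨h1', h2'⟩ | ⟨h1', h2'⟩
            · exact hstep u v h
            · exact ((hstep u a h1').trans hab_reach).trans (hstep b v h2')
            · exact ((hstep u b h1').trans hab_reach.symm).trans (hstep a v h2')
        exact SimpleGraph.Connected.mk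
          (fun u v => reachable_transfer hadj2r (hF'conn.preconnected u v))
      · -- the cost bound
        have hF'X : ∀ e ∈ F', e ∈ X := by
          intro e he
          obtain ⟨h1', h2'⟩ := hF'sub e he
          exact Finset.mem_filter.mpr ⟨Finset.mem_univ _, h1', hRR e h2'⟩
        have hsum1 : ∑ e ∈ insert estar F', w e = w estar + ∑ e ∈ F', w e :=
          Finset.sum_insert hestar_not
        have hsum2 : ∑ e ∈ F', w e = (∑ e ∈ F', w' e) + F'.card * w estar := by
          have hcong : ∀ e ∈ F', w e = w' e + w estar := by
            intro e he
            simp only [hw'def, if_pos (hF'X e he)]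
            ring
          rw [Finset.sum_congr rfl hcong, Finset.sum_add_distrib,
            Finset.sum_const, nsmul_eq_mul]
        -- relating the two sums of m * w
        have hXsubY : X ⊆ univ.filter (fun e => RCross r e) := by
          intro e he
          exact Finset.mem_filter.mpr ⟨Finset.mem_univ _, (Finset.mem_filter.mp he).2.2⟩
        have hY'subY : univ.filter (fun e => RCross r' e) ⊆
            univ.filter (fun e => RCross r e) := by
          intro e he
          exact Finset.mem_filter.mpr ⟨Finset.mem_univ _, hRR e (Finset.mem_filter.mp he).2⟩
        have hsum3 : ∑ e ∈ univ.filter (fun e => RCross r' e), m e * w' e ≤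
            ∑ e ∈ univ.filter (fun e => RCross r e), m e * w' e :=
          Finset.sum_le_sum_of_subset_of_nonneg hY'subY
            (fun e _ _ => mul_nonneg (hm e) (hw' e))
        have hsum4 : ∑ e ∈ univ.filter (fun e => RCross r e), m e * w e =
            (∑ e ∈ univ.filter (fun e => RCross r e), m e * w' e) +
              (∑ e ∈ X, m e) * w estar := by
          have : ∀ e ∈ univ.filter (fun e => RCross r e),
              m e * w e = m e * w' e + (if e ∈ X then m e * w estar else 0) := by
            intro e _
            by_cases heX2 : e ∈ X
            · simp only [hw'def, if_pos heX2]; ring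
            · simp only [hw'def, if_neg heX2]; ring
          rw [Finset.sum_congr rfl this, Finset.sum_add_distrib]
          congr 1
          rw [← Finset.sum_filter, Finset.filter_mem_eq_inter,
            Finset.inter_eq_right.mpr hXsubY, Finset.sum_mul]
        -- the final arithmetic
        have hcard_le : ((F'.card : ℝ) + 1) ≤ (Fintype.card (Quotient r) : ℝ) := by
          have : F'.card + 1 ≤ Fintype.card (Quotient r) := by omega
          exact_mod_cast this
        have hkey : ((F'.card : ℝ) + 1) * w estar ≤ 2 * ((∑ e ∈ X, m e) * w estar) := by
          rw [← mul_assoc]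
          exact mul_le_mul_of_nonneg_right (hcard_le.trans hcount) hl0
        rw [hsum1, hsum2, hsum4]
        have := hF'cost.trans (by linarith [hsum3] :
          2 * ∑ e ∈ univ.filter (fun e => RCross r' e), m e * w' e ≤
            2 * ∑ e ∈ univ.filter (fun e => RCross r e), m e * w' e)
        linarith

end Key

section Prune

variable {V : Type*} [Fintype V]

/-- every finite connected graph given by a finite edge set contains a spanning tree of
no greater cost -/
lemma prune (w : Sym2 V → ℝ) (hw : ∀ e, 0 ≤ w e) :
    ∀ (F : Finset (Sym2 V)), (fromEdgeSet (↑F : Set (Sym2 V))).Connected →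
    ∃ T : SimpleGraph V, T ≤ fromEdgeSet (↑F : Set (Sym2 V)) ∧ T.IsTree ∧
      ∑ e ∈ T.edgeSet.toFinite.toFinset, w e ≤ ∑ e ∈ F, w e := by
  intro F
  induction F using Finset.strongInduction with
  | _ F ih =>
    intro hconn
    by_cases hac : (fromEdgeSet (↑F : Set (Sym2 V))).IsAcyclic
    · refine ⟨_, le_refl _, ⟨hconn, hac⟩, ?_⟩
      apply Finset.sum_le_sum_of_subset_of_nonneg
      · intro e he
        rw [Set.Finite.mem_toFinset, edgeSet_fromEdgeSet, Set.mem_diff] at he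
        exact he.1
      · intro e _ _; exact hw e
    · rw [SimpleGraph.IsAcyclic] at hac; push_neg at hac
      obtain ⟨v, c, hc⟩ := hac
      have hne : c.edges ≠ [] := by
        have h3 := hc.three_le_length
        intro h
        have : c.edges.length = 0 := by simp [h]
        rw [SimpleGraph.Walk.length_edges] at this
        omega
      have hmemc : c.edges.head hne ∈ c.edges := List.head_mem hne
      obtain ⟨x, y, hxy⟩ : ∃ x y, c.edges.head hne = s(x, y) :=
        @Sym2.ind V (fun e => ∃ x y, e = s(x, y)) (fun a b => ⟨a, b, rfl⟩) _
      rw [hxy] at hmemc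
      have heF : s(x, y) ∈ (fromEdgeSet (↑F : Set (Sym2 V))).edgeSet :=
        c.edges_subset_edgeSet hmemc
      have hadj : (fromEdgeSet (↑F : Set (Sym2 V))).Adj x y := heF
      have hnb : ¬ (fromEdgeSet (↑F : Set (Sym2 V))).IsBridge s(x, y) := by
        rw [isBridge_iff_forall_cycle_notMem heF]
        push_neg
        exact ⟨v, c, hc, hmemc⟩
      have hreach : ((fromEdgeSet (↑F : Set (Sym2 V))) \
          fromEdgeSet {s(x, y)}).Reachable x y := by
        rw [isBridge_iff] at hnb
        push_neg at hnb
        exact hnb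
      have hEq : (fromEdgeSet (↑F : Set (Sym2 V))) \ fromEdgeSet {s(x, y)} =
          fromEdgeSet (↑(F.erase s(x, y)) : Set (Sym2 V)) := by
        ext u v'
        simp only [sdiff_adj, fromEdgeSet_adj, Finset.coe_erase, Set.mem_diff,
          Finset.mem_coe, Set.mem_singleton_iff, not_and]
        tauto
      have hconn' : (fromEdgeSet (↑(F.erase s(x, y)) : Set (Sym2 V))).Connected := by
        rw [← hEq]
        haveI : Nonempty V := hconn.nonempty
        refine SimpleGraph.Connected.mk (fun u v' => ?_)
        refine reachable_transfer (fun a b hab => ?_) (hconn.preconnected u v')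
        by_cases hcase : s(a, b) = s(x, y)
        · rw [Sym2.eq_iff] at hcase
          rcases hcase with ⟨rfl, rfl⟩ | ⟨rfl, rfl⟩
          · exact hreach
          · exact hreach.symm
        · exact SimpleGraph.Adj.reachable ⟨hab, by simp [fromEdgeSet_adj, hcase]⟩
      have hmemF : s(x, y) ∈ F := by
        rw [edgeSet_fromEdgeSet, Set.mem_diff] at heF
        exact heF.1
      obtain ⟨T, hT1, hT2, hT3⟩ := ih (F.erase s(x, y)) (Finset.erase_ssubset hmemF) hconn'
      refine ⟨T, hT1.trans (fromEdgeSet_mono ?_), hT2, hT3.trans ?_⟩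
      · exact_mod_cast Finset.erase_subset _ _
      · exact Finset.sum_le_sum_of_subset_of_nonneg (Finset.erase_subset _ _)
          (fun e _ _ => hw e)

end Prune

/-- If connected edge sets `E_1, …, E_K`, each of cost `< C`, are such that
every vertex is covered by at least a `(1−γ)` fraction of them (`0 ≤ γ < 1/2`), then `G` has
a spanning tree of cost strictly less than `(2/(1−2γ))·C`. -/
theorem stmt3 {V : Type*} [Fintype V] [Nonempty V] (G : SimpleGraph V) (w : Sym2 V → ℝ)
    (hw : ∀ e, 0 ≤ w e) (K : ℕ) (hK : 1 ≤ K) (γ C : ℝ) (hγ0 : 0 ≤ γ) (hγ : γ < 1 / 2)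
    (hC : 0 < C) (E : Fin K → Set (Sym2 V)) (hsub : ∀ i, E i ⊆ G.edgeSet)
    (hconn : ∀ i, EdgesConnected (E i))
    (hcost : ∀ i, ∑ e ∈ (E i).toFinite.toFinset, w e < C)
    (hcover : ∀ v : V, ((1 - γ) * K : ℝ) ≤
      (Finset.univ.filter (fun i : Fin K => ∃ e ∈ E i, v ∈ e)).card) :
    ∃ T : SimpleGraph V, T ≤ G ∧ T.IsTree ∧
      ∑ e ∈ T.edgeSet.toFinite.toFinset, w e < 2 / (1 - 2 * γ) * C := by
  have hK' : (0 : ℝ) < K := by exact_mod_cast hK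
  have hd : (0 : ℝ) < 1 - 2 * γ := by linarith
  set D : ℝ := (1 - 2 * γ) * K with hDdef
  have hD : 0 < D := mul_pos hd hK'
  set N : Sym2 V → ℕ := fun e => (univ.filter fun i : Fin K => e ∈ E i).card with hNdef
  set m : Sym2 V → ℝ := fun e => (N e : ℝ) / D with hmdef
  have hm : ∀ e, 0 ≤ m e := fun e => div_nonneg (Nat.cast_nonneg _) hD.le
  set r0 : Setoid V := ⟨Eq, eq_equivalence⟩ with hr0def
  -- cut condition
  have hcut0 : ∀ S : Set V, S.Nonempty → S ≠ Set.univ →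
      (∀ a b, r0.r a b → (a ∈ S ↔ b ∈ S)) →
      1 ≤ ∑ e ∈ univ.filter (fun e => XCross S e), m e := by
    intro S hSne hSuniv _
    obtain ⟨u, huS⟩ := hSne
    obtain ⟨v, hvS⟩ := Set.ne_univ_iff_exists_notMem S |>.mp hSuniv
    set A : Finset (Fin K) :=
      univ.filter (fun i : Fin K => (∃ e ∈ E i, u ∈ e) ∧ (∃ e ∈ E i, v ∈ e)) with hAdef
    set Pu : Finset (Fin K) := univ.filter (fun i : Fin K => ∃ e ∈ E i, u ∈ e) with hPudef
    set Pv : Finset (Fin K) := univ.filter (fun i : Fin K => ∃ e ∈ E i, v ∈ e) with hPvdef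
    have hA_eq : A = Pu ∩ Pv := by
      rw [hAdef, hPudef, hPvdef, ← Finset.filter_and]
    have hcardA : D ≤ (A.card : ℝ) := by
      have h1 : Pu.card + Pv.card = (Pu ∩ Pv).card + (Pu ∪ Pv).card :=
        (Finset.card_inter_add_card_union Pu Pv).symm
      have h2 : (Pu ∪ Pv).card ≤ K := by
        have := Finset.card_le_univ (Pu ∪ Pv)
        simpa using this
      have h3 := hcover u
      have h4 := hcover v
      rw [← hPudef] at h3
      rw [← hPvdef] at h4
      have h5 : ((Pu ∩ Pv).card : ℝ) ≥ (Pu.card : ℝ) + (Pv.card : ℝ) - K := by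
        have h1' : (Pu.card : ℝ) + Pv.card = ((Pu ∩ Pv).card : ℝ) + (Pu ∪ Pv).card := by
          exact_mod_cast congrArg (Nat.cast : ℕ → ℝ) h1
        have h2' : ((Pu ∪ Pv).card : ℝ) ≤ K := by exact_mod_cast h2
        linarith
      rw [hA_eq]
      rw [hDdef]
      linarith
    have hAsub : A ⊆ (univ.filter (fun e => XCross S e)).biUnion
        (fun e => univ.filter fun i : Fin K => e ∈ E i) := by
      intro i hi
      obtain ⟨hu', hv'⟩ := (Finset.mem_filter.mp hi).2
      obtain ⟨p⟩ := hconn i u v hu' hv'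
      obtain ⟨e, hep, hex⟩ := walk_cross p S huS hvS
      have heEi : e ∈ E i := by
        have := p.edges_subset_edgeSet hep
        rw [edgeSet_fromEdgeSet] at this
        exact this.1
      exact Finset.mem_biUnion.mpr ⟨e, Finset.mem_filter.mpr ⟨Finset.mem_univ _, hex⟩,
        Finset.mem_filter.mpr ⟨Finset.mem_univ _, heEi⟩⟩
    have hcard2 : (A.card : ℝ) ≤ ∑ e ∈ univ.filter (fun e => XCross S e), (N e : ℝ) := by
      have := (Finset.card_le_card hAsub).trans (Finset.card_biUnion_le)
      exact_mod_cast this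
    have hsum : ∑ e ∈ univ.filter (fun e => XCross S e), m e =
        (∑ e ∈ univ.filter (fun e => XCross S e), (N e : ℝ)) / D := by
      rw [hmdef, Finset.sum_div]
    rw [hsum, le_div_iff₀ hD, one_mul]
    linarith
  -- apply the key lemma
  obtain ⟨F, hFsub, -, hFconn, hFcost⟩ :=
    keyM m hm (Fintype.card (Quotient r0)) r0 w hw le_rfl hcut0
  -- HGraph r0 F is just fromEdgeSet F
  have hHeq : HGraph r0 F = fromEdgeSet (↑F : Set (Sym2 V)) := by
    ext u v
    rw [hgraph_adj, fromEdgeSet_adj]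
    constructor
    · rintro ⟨h | h, hne⟩
      · exact ⟨h, hne⟩
      · exact absurd h hne
    · rintro ⟨h, hne⟩
      exact ⟨Or.inl h, hne⟩
  rw [hHeq] at hFconn
  -- edges of F lie in G
  have hFG : ∀ e ∈ F, e ∈ G.edgeSet := by
    intro e he
    have hm0 := (hFsub e he).1
    have hN0 : N e ≠ 0 := by
      intro h
      apply hm0
      rw [hmdef]
      simp [h]
    obtain ⟨i, hi⟩ := Finset.card_pos.mp (Nat.pos_of_ne_zero hN0)
    exact hsub i (Finset.mem_filter.mp hi).2
  obtain ⟨T, hT1, hT2, hT3⟩ := prune w hw F hFconn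
  have hTG : T ≤ G := by
    refine hT1.trans (fun u v hadj => ?_)
    rw [fromEdgeSet_adj] at hadj
    exact (SimpleGraph.mem_edgeSet G).mp (hFG _ hadj.1)
  refine ⟨T, hTG, hT2, ?_⟩
  -- cost chain
  have hc1 : 2 * ∑ e ∈ univ.filter (fun e => RCross r0 e), m e * w e ≤
      2 * ∑ e : Sym2 V, m e * w e := by
    have := Finset.sum_le_sum_of_subset_of_nonneg
      (Finset.filter_subset (fun e => RCross r0 e) univ)
      (fun e _ _ => mul_nonneg (hm e) (hw e))
    linarith
  have hc2 : ∑ e : Sym2 V, m e * w e = (∑ e : Sym2 V, (N e : ℝ) * w e) / D := by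
    rw [hmdef, Finset.sum_div]
    exact Finset.sum_congr rfl (fun e _ => by rw [div_mul_eq_mul_div])
  have hc3 : ∑ e : Sym2 V, (N e : ℝ) * w e =
      ∑ i : Fin K, ∑ e ∈ (E i).toFinite.toFinset, w e := by
    have hstep : ∀ e : Sym2 V, (N e : ℝ) * w e = ∑ i ∈ univ.filter
        (fun i : Fin K => e ∈ E i), w e := by
      intro e
      rw [Finset.sum_const, nsmul_eq_mul, hNdef]
    rw [Finset.sum_congr rfl (fun e _ => hstep e)]
    simp_rw [Finset.sum_filter]
    rw [Finset.sum_comm]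
    refine Finset.sum_congr rfl (fun i _ => ?_)
    rw [← Finset.sum_filter]
    refine Finset.sum_congr ?_ (fun _ _ => rfl)
    ext e
    simp only [Finset.mem_filter, Finset.mem_univ, true_and, Set.Finite.mem_toFinset]
  haveI : Nonempty (Fin K) := ⟨⟨0, by omega⟩⟩
  have hc4 : ∑ i : Fin K, ∑ e ∈ (E i).toFinite.toFinset, w e < K * C := by
    have := Finset.sum_lt_sum_of_nonempty (Finset.univ_nonempty (α := Fin K))
      (fun i _ => hcost i)
    rw [Finset.sum_const, Finset.card_univ, Fintype.card_fin, nsmul_eq_mul] at this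
    exact this
  have hc5 : ∑ e ∈ T.edgeSet.toFinite.toFinset, w e ≤
      2 * (∑ e : Sym2 V, (N e : ℝ) * w e) / D := by
    rw [mul_div_assoc, ← hc2]
    exact hT3.trans (hFcost.trans hc1)
  have hc6 : 2 * (∑ e : Sym2 V, (N e : ℝ) * w e) / D < 2 * (K * C) / D := by
    gcongr
    rw [hc3]
    exact hc4
  have hc7 : 2 * (K * C) / D = 2 / (1 - 2 * γ) * C := by
    rw [hDdef]
    field_simp
  calc ∑ e ∈ T.edgeSet.toFinite.toFinset, w e
      ≤ 2 * (∑ e : Sym2 V, (N e : ℝ) * w e) / D := hc5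
    _ < 2 * (K * C) / D := hc6
    _ = 2 / (1 - 2 * γ) * C := hc7
end

section
/- Let (l_k)_{k≥0} be a sequence of nonnegative reals whose partial sums S_k = Σ_{i=0}^{k} l_i tend to infinity. If there exists ε > 0 such that l_k ≥ ε·S_{k−1} for infinitely many k ≥ 1, then limsup_{k→∞} (Σ_{i=0}^{k} l_i²)/S_k = ∞. -/
open Filter Finset

/-- If the partial sums `S_k = Σ_{i=0}^k l_i` of a nonnegative sequence tend
to infinity and there is `ε > 0` with `l_k ≥ ε·S_{k−1}` for infinitely many `k ≥ 1`, then
`limsup_k (Σ_{i=0}^k l_i²)/S_k = ∞`. -/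
theorem stmt7 (l : ℕ → ℝ) (hl : ∀ k, 0 ≤ l k)
    (hdiv : Filter.Tendsto (fun k => ∑ i ∈ Finset.range (k + 1), l i)
      Filter.atTop Filter.atTop)
    (ε : ℝ) (hε : 0 < ε)
    (hinf : {k : ℕ | 1 ≤ k ∧ ε * (∑ i ∈ Finset.range k, l i) ≤ l k}.Infinite) :
    Filter.limsup
      (fun k => (((∑ i ∈ Finset.range (k + 1), (l i) ^ 2) /
        (∑ i ∈ Finset.range (k + 1), l i) : ℝ) : EReal)) Filter.atTop = ⊤ := by
  rw [EReal.eq_top_iff_forall_lt]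
  intro M
  have key : ∀ C : ℝ, ∃ᶠ k in atTop,
      C ≤ ((∑ i ∈ Finset.range (k + 1), (l i) ^ 2) /
        (∑ i ∈ Finset.range (k + 1), l i) : ℝ) := by
    intro C
    rw [Filter.frequently_atTop]
    intro N
    have hbig := (Filter.tendsto_atTop.mp hdiv) (max 1 ((C * (1 + ε)) / ε ^ 2))
    rw [Filter.eventually_atTop] at hbig
    obtain ⟨K, hK⟩ := hbig
    obtain ⟨k, hkmem, hkge⟩ := hinf.exists_gt (max N (K + 1))
    refine ⟨k, le_trans (le_max_left _ _) hkge.le, ?_⟩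
    obtain ⟨hk1, hkl⟩ := hkmem
    have hkK : K + 1 < k := lt_of_le_of_lt (le_max_right _ _) hkge
    set S : ℝ := ∑ i ∈ Finset.range k, l i with hSdef
    have hSK : max 1 ((C * (1 + ε)) / ε ^ 2) ≤ S := by
      have hk' : K ≤ k - 1 := by omega
      have := hK (k - 1) hk'
      rwa [show k - 1 + 1 = k by omega] at this
    have hS1 : (1 : ℝ) ≤ S := le_trans (le_max_left _ _) hSK
    have hSC : C * (1 + ε) / ε ^ 2 ≤ S := le_trans (le_max_right _ _) hSK
    have hSpos : 0 < S := lt_of_lt_of_le one_pos hS1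
    have hsum : ∑ i ∈ Finset.range (k + 1), l i = S + l k := by
      rw [Finset.sum_range_succ]
    have hlk : 0 ≤ l k := hl k
    have hεS : ε * S ≤ l k := hkl
    have hlkpos : 0 < l k := lt_of_lt_of_le (by positivity) hεS
    have hSk_pos : 0 < ∑ i ∈ Finset.range (k + 1), l i := by
      rw [hsum]; positivity
    have hsq : l k ^ 2 ≤ ∑ i ∈ Finset.range (k + 1), (l i) ^ 2 := by
      rw [Finset.sum_range_succ]
      have : 0 ≤ ∑ i ∈ Finset.range k, (l i) ^ 2 :=
        Finset.sum_nonneg fun i _ => sq_nonneg _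
      linarith
    have hSk_le : ∑ i ∈ Finset.range (k + 1), l i ≤ l k * (1 + ε) / ε := by
      rw [hsum, le_div_iff₀ hε]
      nlinarith
    have h1 : l k ^ 2 / (l k * (1 + ε) / ε) ≤
        (∑ i ∈ Finset.range (k + 1), (l i) ^ 2) / (∑ i ∈ Finset.range (k + 1), l i) :=
      div_le_div₀ (le_trans (sq_nonneg _) hsq) hsq (by positivity) hSk_le
    have h2 : l k ^ 2 / (l k * (1 + ε) / ε) = l k * ε / (1 + ε) := by
      field_simp
    have h3 : C ≤ l k * ε / (1 + ε) := by
      rw [le_div_iff₀ (by linarith : (0:ℝ) < 1 + ε)]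
      rw [div_le_iff₀ (by positivity : (0:ℝ) < ε ^ 2)] at hSC
      nlinarith
    calc C ≤ l k * ε / (1 + ε) := h3
      _ = l k ^ 2 / (l k * (1 + ε) / ε) := h2.symm
      _ ≤ _ := h1
  have hfreq : ∃ᶠ k in atTop, ((M + 1 : ℝ) : EReal) ≤
      (((∑ i ∈ Finset.range (k + 1), (l i) ^ 2) /
        (∑ i ∈ Finset.range (k + 1), l i) : ℝ) : EReal) := by
    apply (key (M + 1)).mono
    intro k hk
    exact_mod_cast hk
  have hle := Filter.le_limsup_of_frequently_le' hfreq
  calc (M : EReal) < ((M + 1 : ℝ) : EReal) := by exact_mod_cast (by linarith : M < M + 1)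
    _ ≤ _ := hle
end

section
/- Let G = (V, E) be a finite undirected graph with |V| ≥ 2, let K ≥ 1 and 0 ≤ γ < 1/2, and let E_1, …, E_K ⊆ E be connected edge sets such that every vertex of G is an endpoint of an edge in at least (1−γ)·K of the sets. For each edge e let v_e = |{i : e ∈ E_i}| / ((1−2γ)·K). Then for every nonempty proper subset A ⊊ V, the sum of v_e over all edges e with exactly one endpoint in A is at least 1 (i.e., the vector v is feasible for the fractional spanning-tree cut LP). -/
open Finset SimpleGraph

attribute [local instance] Classical.propDecidable

/-- The fractional vector `v_e = |{i : e ∈ E_i}| / ((1−2γ)·K)` is feasible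
for the fractional spanning-tree cut LP: every nonempty proper cut carries total fractional
value at least 1. -/
theorem stmt10 {V : Type*} [Fintype V] (hV : 2 ≤ Fintype.card V) (G : SimpleGraph V)
    (K : ℕ) (hK : 1 ≤ K) (γ : ℝ) (hγ0 : 0 ≤ γ) (hγ : γ < 1 / 2)
    (E : Fin K → Set (Sym2 V)) (hsub : ∀ i, E i ⊆ G.edgeSet)
    (hconn : ∀ i, EdgesConnected (E i))
    (hcover : ∀ x : V, ((1 - γ) * K : ℝ) ≤
      (Finset.univ.filter (fun i : Fin K => ∃ e ∈ E i, x ∈ e)).card)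
    (A : Set V) (hA : A.Nonempty) (hA' : A ≠ Set.univ) :
    1 ≤ ∑ e ∈ G.edgeSet.toFinite.toFinset.filter
        (fun e => ∃ u v : V, e = s(u, v) ∧ u ∈ A ∧ v ∉ A),
      ((Finset.univ.filter (fun i : Fin K => e ∈ E i)).card : ℝ) / ((1 - 2 * γ) * K) := by
  classical
  obtain ⟨x, hx⟩ := hA
  obtain ⟨y, hy⟩ : ∃ y, y ∉ A := by
    by_contra h; push_neg at h; exact hA' (Set.eq_univ_of_forall h)
  set T := G.edgeSet.toFinite.toFinset.filter
      (fun e => ∃ u v : V, e = s(u, v) ∧ u ∈ A ∧ v ∉ A) with hT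
  set P := Finset.univ.filter (fun i : Fin K => ∃ e ∈ E i, x ∈ e) with hP
  set Q := Finset.univ.filter (fun i : Fin K => ∃ e ∈ E i, y ∈ e) with hQ
  have hKpos : (0:ℝ) < K := by exact_mod_cast hK
  have hDpos : (0:ℝ) < (1 - 2 * γ) * K := mul_pos (by linarith) hKpos
  -- every i in P ∩ Q has a cut edge
  have hcut : ∀ i ∈ P ∩ Q, ∃ e ∈ T, e ∈ E i := by
    intro i hi
    rw [Finset.mem_inter, hP, hQ, Finset.mem_filter, Finset.mem_filter] at hi
    obtain ⟨⟨-, hxE⟩, -, hyE⟩ := hi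
    obtain ⟨p⟩ := hconn i x y hxE hyE
    obtain ⟨d, hd, hdA⟩ := p.exists_boundary_dart A hx hy
    have hedge : s(d.fst, d.snd) ∈ (fromEdgeSet (E i)).edgeSet := d.adj
    rw [edgeSet_fromEdgeSet] at hedge
    refine ⟨s(d.fst, d.snd), ?_, hedge.1⟩
    rw [hT, Finset.mem_filter, Set.Finite.mem_toFinset]
    exact ⟨hsub i hedge.1, d.fst, d.snd, rfl, hdA.1, hdA.2⟩
  -- count of good indices
  have hPQ : ((1 - 2 * γ) * K : ℝ) ≤ (P ∩ Q).card := by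
    have h1 := hcover x
    have h2 := hcover y
    rw [← hP] at h1
    rw [← hQ] at h2
    have hc : P.card + Q.card ≤ (P ∩ Q).card + K := by
      have := Finset.card_inter_add_card_union P Q
      have hu : (P ∪ Q).card ≤ K := by
        simpa using Finset.card_le_card (Finset.subset_univ (P ∪ Q))
      omega
    have hc' : (P.card : ℝ) + Q.card ≤ ((P ∩ Q).card : ℝ) + K := by exact_mod_cast hc
    nlinarith
  -- double counting
  have hdc : (P ∩ Q).card ≤ ∑ e ∈ T, (Finset.univ.filter (fun i : Fin K => e ∈ E i)).card := by
    calc (P ∩ Q).card = ∑ _i ∈ P ∩ Q, 1 := by simp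
      _ ≤ ∑ i ∈ P ∩ Q, (T.filter (fun e => e ∈ E i)).card := by
          refine Finset.sum_le_sum fun i hi => ?_
          obtain ⟨e, he, hei⟩ := hcut i hi
          exact Finset.card_pos.mpr ⟨e, Finset.mem_filter.mpr ⟨he, hei⟩⟩
      _ ≤ ∑ i ∈ Finset.univ, (T.filter (fun e => e ∈ E i)).card :=
          Finset.sum_le_sum_of_subset (Finset.subset_univ _)
      _ = ∑ e ∈ T, (Finset.univ.filter (fun i : Fin K => e ∈ E i)).card := by
          simp only [Finset.card_filter]
          rw [Finset.sum_comm]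
  rw [← Finset.sum_div, le_div_iff₀ hDpos, one_mul]
  calc ((1 - 2 * γ) * K : ℝ) ≤ (P ∩ Q).card := hPQ
    _ ≤ ∑ e ∈ T, ((Finset.univ.filter (fun i : Fin K => e ∈ E i)).card : ℝ) := by
        exact_mod_cast hdc
end
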